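/- Let q ≥ 2, m > 3, n = q^m - 1 with m odd. Suppose 1 ≤ x, y < n satisfy x·y < q^m - 1 - q^{(m-1)/2}, with x having top nonzero q-ary digit at position k ≤ (m-1)/2, and let l = m - k - 1. Then ((-x·q^l) mod n)·((-y·q^l) mod n) ≥ q^m - 1. -/
import Mathlib

private lemma stmt6_four_le (q Q : ℤ) (hq : 2 ≤ q) (h : q ^ 2 ≤ Q) : 4 ≤ Q := by
  nlinarith [sq_nonneg (q - 2)]

/-- Case k = s : (n - xQ)(n - yQ) ≥ n, abstracted as u*v ≥ n. -/
private lemma stmt6_aux1 (q Q n u v : ℤ) (hq : 2 ≤ q) (hq2s : q ^ 2 ≤ Q)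
    (hnQ : n = q * Q ^ 2 - 1) (hu1 : Q - 1 ≤ u) (hv1 : Q + 1 ≤ v)
    (h2 : (n - u) * (n - v) ≤ (n - Q - 1) * Q ^ 2) : n ≤ u * v := by
  have hQ4 : 4 ≤ Q := stmt6_four_le q Q hq hq2s
  have hQQ : (16 : ℤ) ≤ Q * Q := by nlinarith
  have hn2 : 2 * Q ^ 2 - 1 ≤ n := by
    have := mul_nonneg (by linarith : (0:ℤ) ≤ q - 2) (sq_nonneg Q)
    linarith
  have hn0 : (0 : ℤ) < n := by nlinarith
  have hu0 : 0 < u := by linarith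
  have hv0 : 0 < v := by linarith
  have t1 : 0 < u * v := mul_pos hu0 hv0
  have t2 : 0 < Q * Q * Q := by positivity
  have t3 : 0 < Q * Q := by positivity
  have h3 : n * (n - Q ^ 2) < n * (u + v) := by nlinarith [h2, t1, t2, t3]
  have h3' : n - Q ^ 2 < u + v := lt_of_mul_lt_mul_left h3 (le_of_lt hn0)
  have hSum1 : n - Q ^ 2 + 1 ≤ u + v := Int.add_one_le_iff.mpr h3'
  have ha : 0 ≤ (u - (Q - 1)) * (v - (Q - 1)) :=
    mul_nonneg (by linarith) (by linarith)
  have hb : (Q - 1) * (n - Q ^ 2 + 1) ≤ (Q - 1) * (u + v) :=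
    mul_le_mul_of_nonneg_left hSum1 (by linarith)
  have hc : 0 ≤ (n - (2 * Q ^ 2 - 1)) * (Q - 2) :=
    mul_nonneg (by linarith) (by linarith)
  have hd : 0 ≤ Q * Q * (Q - 4) := mul_nonneg (by positivity) (by linarith)
  nlinarith [ha, hb, hc, hd]

/-- Case k = 0 key inequality. S plays the role of q^s, A of n - x*q^l. -/
private lemma stmt6_auxk0 (q S n x y A : ℤ) (hq : 2 ≤ q) (hS : q ^ 2 ≤ S)
    (hn : n = S * S * q - 1) (hx1 : 1 ≤ x) (hy1 : 1 ≤ y)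
    (hxy : x * y ≤ n - S - 1) (hA1 : S * S - 1 ≤ A) : n * q ≤ A * (n - y) := by
  have hS4 : 4 ≤ S := stmt6_four_le q S hq hS
  have hSS : (16 : ℤ) ≤ S * S := by nlinarith
  have hn0 : (0 : ℤ) < n := by nlinarith
  have hyxy : y ≤ x * y := by
    have t := mul_le_mul_of_nonneg_left hx1 (by linarith : (0:ℤ) ≤ y)
    linarith [t]
  have hyn : y < n := by linarith
  have hA0 : (0 : ℤ) ≤ A := by linarith
  have hAgeq : q ≤ A := by nlinarith
  have hxny : n * (x - 1) + S + 1 ≤ x * (n - y) := by nlinarith [hxy]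
  have hnq : n * q = S * S * q * q - q := by rw [hn]; ring
  have hAq2 : n * q ≤ A * (S + 1) := by
    have t0 := mul_le_mul_of_nonneg_right hA1 (by linarith : (0:ℤ) ≤ S + 1)
    have t1 : 0 ≤ S * S * (S - q ^ 2) := mul_nonneg (by positivity) (by linarith)
    nlinarith [t0, t1, sq_nonneg (S - 1)]
  have hAx := mul_le_mul_of_nonneg_left hxny hA0
  have hnx1 : (0:ℤ) ≤ n * (x - 1) := mul_nonneg hn0.le (by linarith)
  have hprod := mul_le_mul_of_nonneg_right hAgeq hnx1
  have hfin : n * q * x ≤ A * (n - y) * x := by nlinarith [hAx, hprod, hAq2]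
  exact le_of_mul_le_mul_right hfin (by linarith)

/-- Case 1 ≤ k < s key inequality. K = q^(k+1), S = q^s, T = q^(s+1). -/
private lemma stmt6_auxk1 (n x y A K S T : ℤ) (hx2 : 2 ≤ x) (hy1 : 1 ≤ y)
    (hxy : x * y ≤ n - S - 1) (hK : 0 < K) (hAT : T - 1 ≤ A) (hA2K : 2 * K - 1 ≤ A)
    (hTS : T * S = n + 1) (hST : S ≤ T) (hS0 : 0 < S) (hn0 : 0 < n) :
    n * K ≤ A * (n - y) := by
  have hA0 : (0 : ℤ) ≤ A := by linarith
  have hxny : n * (x - 1) + S + 1 ≤ x * (n - y) := by nlinarith [hxy]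
  have hAq : n ≤ A * (S + 1) := by
    have t := mul_le_mul_of_nonneg_right hAT (by linarith : (0:ℤ) ≤ S + 1)
    nlinarith [t]
  have hprod2 : K - 1 ≤ (x - 1) * (A - K) := by
    have t := mul_le_mul_of_nonneg_right (by linarith : (1:ℤ) ≤ x - 1)
      (by linarith : (0:ℤ) ≤ A - K)
    linarith [t]
  have hAx := mul_le_mul_of_nonneg_left hxny hA0
  have hpn := mul_le_mul_of_nonneg_left hprod2 hn0.le
  have hfin : n * K * x ≤ A * (n - y) * x := by nlinarith [hAx, hpn, hAq]
  exact le_of_mul_le_mul_right hfin (by linarith)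

set_option maxHeartbeats 1000000 in
/-- Odd-m subcase of case ii) of Lemma 4: for l = m - k - 1 the product of residues
is at least q^m - 1. -/
theorem stmt_6 (q : ℤ) (hq : 2 ≤ q) (m : ℕ) (hm : 3 < m) (hmo : m % 2 = 1)
    (x y : ℤ) (k : ℕ)
    (hx1 : 1 ≤ x) (hxn : x < q ^ m - 1) (hy1 : 1 ≤ y) (hyn : y < q ^ m - 1)
    (hxy : x * y < q ^ m - 1 - q ^ ((m - 1) / 2))
    (hxk : q ^ k ≤ x) (hxk' : x ≤ q ^ (k + 1) - 1) (hk : k ≤ (m - 1) / 2) :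
    ((-x * q ^ (m - k - 1)) % (q ^ m - 1)) * ((-y * q ^ (m - k - 1)) % (q ^ m - 1)) ≥
      q ^ m - 1 := by
  set s := (m - 1) / 2 with hs
  have hms : m = 2 * s + 1 := by omega
  have hs2 : 2 ≤ s := by omega
  have hq1 : (1 : ℤ) ≤ q := by linarith
  have hq0 : (0 : ℤ) < q := by linarith
  set n : ℤ := q ^ m - 1 with hn
  clear_value n
  set l : ℕ := m - k - 1 with hl
  have hqm : q ^ l * q ^ (k + 1) = q ^ m := by rw [← pow_add]; congr 1; omega
  have hn0 : (0 : ℤ) < n := by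
    have : (1 : ℤ) < q ^ m := one_lt_pow₀ (by linarith) (by omega)
    rw [hn]; linarith
  have hqm1 : q ^ m = n + 1 := by rw [hn]; ring
  have hLpos : (0 : ℤ) < q ^ l := pow_pos hq0 l
  have hKpos : (0 : ℤ) < q ^ (k + 1) := pow_pos hq0 (k + 1)
  have hSpos : (0 : ℤ) < q ^ s := pow_pos hq0 s
  have hxy' : x * y ≤ n - q ^ s - 1 := by linarith
  have hxL : x * q ^ l ≤ n - (q ^ l - 1) := by
    have h1 : x * q ^ l ≤ (q ^ (k + 1) - 1) * q ^ l :=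
      mul_le_mul_of_nonneg_right hxk' (le_of_lt hLpos)
    have h2 : (q ^ (k + 1) - 1) * q ^ l = q ^ m - q ^ l := by rw [← hqm]; ring
    rw [h2, hqm1] at h1; linarith
  have hxL0 : 0 < x * q ^ l := mul_pos (by linarith) hLpos
  have hA : (-x * q ^ l) % n = n - x * q ^ l := by
    have h0 : 0 ≤ n - x * q ^ l := by linarith
    have h1 : n - x * q ^ l < n := by linarith
    have h2 : -x * q ^ l = (n - x * q ^ l) + n * (-1) := by ring
    rw [h2, Int.add_mul_emod_self_left, Int.emod_eq_of_lt h0 h1]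
  have hA1 : q ^ l - 1 ≤ n - x * q ^ l := by linarith
  have hA0 : 0 ≤ n - x * q ^ l := by linarith
  rcases eq_or_lt_of_le hk with hks | hks
  · -- case k = s
    have hls : l = s := by omega
    have hQs : (q : ℤ) ^ s = q ^ l := by rw [hls]
    have hxQ : q ^ l ≤ x := by rw [← hQs]; rw [hks] at hxk; exact hxk
    have hyL : y * q ^ l ≤ x * y := by
      calc y * q ^ l ≤ y * x := mul_le_mul_of_nonneg_left hxQ (by linarith)
        _ = x * y := by ring
    have hyL1 : 0 < y * q ^ l := mul_pos (by linarith) hLpos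
    have hyLn : y * q ^ l ≤ n - q ^ l - 1 := by
      have h := hxy'; rw [hQs] at h; linarith
    have hB : (-y * q ^ l) % n = n - y * q ^ l := by
      have h0 : 0 ≤ n - y * q ^ l := by linarith
      have h1 : n - y * q ^ l < n := by linarith
      have h2 : -y * q ^ l = (n - y * q ^ l) + n * (-1) := by ring
      rw [h2, Int.add_mul_emod_self_left, Int.emod_eq_of_lt h0 h1]
    rw [hA, hB]
    have hq2s : q ^ 2 ≤ q ^ l := by
      rw [← hQs]; exact pow_le_pow_right₀ hq1 (by omega)
    have hnQ : n = q * (q ^ l) ^ 2 - 1 := by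
      have h1 : (q ^ l) ^ 2 * q = q ^ m := by
        rw [← pow_mul, ← pow_succ]; congr 1; omega
      rw [hn, ← h1]; ring
    have h2 : (n - (n - x * q ^ l)) * (n - (n - y * q ^ l))
        ≤ (n - q ^ l - 1) * (q ^ l) ^ 2 := by
      have he : (n - (n - x * q ^ l)) * (n - (n - y * q ^ l))
          = x * y * (q ^ l) ^ 2 := by ring
      have ht := mul_le_mul_of_nonneg_right hxy' (sq_nonneg (q ^ l))
      rw [hQs] at ht
      rw [he]; linarith
    exact stmt6_aux1 q (q ^ l) n (n - x * q ^ l) (n - y * q ^ l) hq hq2s hnQ hA1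
      (by linarith) h2
  · -- case k < s
    have hks' : k + 1 ≤ s := hks
    set B : ℤ := (-y * q ^ l) % n with hB
    have hB0 : 0 ≤ B := Int.emod_nonneg _ (ne_of_gt hn0)
    have hBdef : B = -y * q ^ l - n * ((-y * q ^ l) / n) := Int.emod_def _ _
    set d : ℤ := (-y * q ^ l) / n with hd
    set w : ℤ := -y - d * q ^ (k + 1) with hw
    have hwid : B * q ^ (k + 1) + y = n * w := by
      have h1 : B * q ^ (k + 1) + y
          = -y * (q ^ l * q ^ (k + 1)) - n * (d * q ^ (k + 1)) + y := by
        rw [hBdef]; ring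
      rw [h1, hqm, hqm1, hw]; ring
    have hw1 : 1 ≤ w := by
      have hpos : 0 < n * w := by
        rw [← hwid]
        have := mul_nonneg hB0 hKpos.le
        linarith
      by_contra h
      push_neg at h
      have hw0 : w ≤ 0 := by linarith
      have h2 : n * w ≤ n * 0 := mul_le_mul_of_nonneg_left hw0 hn0.le
      simp only [mul_zero] at h2; linarith
    have hBk1 : n - y ≤ B * q ^ (k + 1) := by
      have : n * 1 ≤ n * w := mul_le_mul_of_nonneg_left hw1 hn0.le
      linarith [hwid]
    have hql_s1 : q ^ (s + 1) ≤ q ^ l := pow_le_pow_right₀ hq1 (by omega)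
    have hql_k2 : q ^ (k + 2) ≤ q ^ l := pow_le_pow_right₀ hq1 (by omega)
    have hss : q ^ (s + 1) * q ^ s = q ^ m := by rw [← pow_add]; congr 1; omega
    have hqs1 : q ^ s ≤ q ^ (s + 1) := pow_le_pow_right₀ hq1 (by omega)
    have hkey : n * q ^ (k + 1) ≤ (n - x * q ^ l) * (n - y) := by
      rcases Nat.eq_zero_or_pos k with hk0 | hk1
      · -- k = 0
        have hk1q : q ^ (k + 1) = q := by
          have h : k + 1 = 1 := by omega
          rw [h, pow_one]
        have hQQ : q ^ l = q ^ s * q ^ s := by rw [← pow_add]; congr 1; omega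
        have hZq2 : q ^ 2 ≤ q ^ s := pow_le_pow_right₀ hq1 (by omega)
        have hn' : n = q ^ s * q ^ s * q - 1 := by
          have h2 : q ^ s * q ^ s * q = q ^ m := by
            rw [← hQQ, ← pow_succ]; congr 1; omega
          rw [h2, hqm1]; ring
        have hA1' : q ^ s * q ^ s - 1 ≤ n - x * q ^ l := by rw [← hQQ]; linarith
        have := stmt6_auxk0 q (q ^ s) n x y (n - x * q ^ l) hq hZq2 hn' hx1 hy1
          hxy' hA1'
        rw [hk1q]; linarith [this]
      · -- k ≥ 1
        have hqk : q ≤ q ^ k := by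
          calc q = q ^ 1 := (pow_one q).symm
            _ ≤ q ^ k := pow_le_pow_right₀ hq1 (by omega)
        have hx2 : 2 ≤ x := by linarith
        have hq2k : 2 * q ^ (k + 1) ≤ q ^ (k + 2) := by
          have he : q ^ (k + 2) = q * q ^ (k + 1) := by rw [← pow_succ']
          have t := mul_nonneg (by linarith : (0:ℤ) ≤ q - 2) hKpos.le
          linarith [t, he]
        have hAT : q ^ (s + 1) - 1 ≤ n - x * q ^ l := by linarith
        have hA2K : 2 * q ^ (k + 1) - 1 ≤ n - x * q ^ l := by linarith
        have hTS : q ^ (s + 1) * q ^ s = n + 1 := by rw [hss, hqm1]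
        exact stmt6_auxk1 n x y (n - x * q ^ l) (q ^ (k + 1)) (q ^ s) (q ^ (s + 1))
          hx2 hy1 hxy' hKpos hAT hA2K hTS hqs1 hSpos hn0
    rw [hA]
    have h1 : (n - x * q ^ l) * (n - y) ≤ (n - x * q ^ l) * (B * q ^ (k + 1)) :=
      mul_le_mul_of_nonneg_left hBk1 hA0
    have h2 : n * q ^ (k + 1) ≤ ((n - x * q ^ l) * B) * q ^ (k + 1) := by
      calc n * q ^ (k + 1) ≤ (n - x * q ^ l) * (n - y) := hkey
        _ ≤ (n - x * q ^ l) * (B * q ^ (k + 1)) := h1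
        _ = ((n - x * q ^ l) * B) * q ^ (k + 1) := by ring
    exact le_of_mul_le_mul_right h2 hKpos
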